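/- Let ζ_p ∈ (0,∞) for p ∈ ℕ with ζ_p → ζ ∈ (0,∞), and for each p let f_p : [0, ζ_p) → ℝ be nondecreasing; let f : [0, ζ) → ℝ be nondecreasing. Write M_p = sup_{0≤x<ζ_p} f_p(x) ∈ ℝ ∪ {+∞} and M = sup_{0≤x<ζ} f(x). Assume: (i) f_p(c) → f(c) for every c ∈ [0, ζ) at which f is continuous; and (ii) lim_{c↑ζ} limsup_{p→∞} (M_p − f_p(c)) = 0. Then M < +∞ and M_p → M. -/

import Mathlib

open Filter Set
open scoped Topology

/-- Auxiliary: a function monotone on `Ico 0 ζ'` has a continuity point (within `Ico 0 ζ'`)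
in any interval `Ioo a ζ'` with `0 ≤ a < ζ'`. -/
lemma exists_cont_pt_aux {ζ' : ℝ} {f' : ℝ → ℝ} (hmono' : MonotoneOn f' (Ico 0 ζ'))
    {a : ℝ} (ha0 : 0 ≤ a) (ha : a < ζ') :
    ∃ c ∈ Ioo a ζ', ContinuousWithinAt f' (Ico 0 ζ') c := by
  obtain ⟨b, hab, hbζ⟩ := exists_between ha
  have hb0 : (0 : ℝ) ≤ b := ha0.trans hab.le
  set g : ℝ → ℝ := fun x => f' (min (max x 0) b) with hg
  have hgmem : ∀ x, min (max x 0) b ∈ Ico 0 ζ' := fun x =>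
    ⟨le_min (le_max_right x 0) hb0, (min_le_right _ b).trans_lt hbζ⟩
  have hgmono : Monotone g := fun x y hxy =>
    hmono' (hgmem x) (hgmem y) (min_le_min (max_le_max hxy le_rfl) le_rfl)
  have hD : Set.Countable {x | ¬ContinuousAt g x} := hgmono.countable_not_continuousAt
  have hdense : Dense ({x | ¬ContinuousAt g x}ᶜ) := hD.dense_compl ℝ
  obtain ⟨c, hcU, hcD⟩ :=
    hdense.inter_open_nonempty (Ioo a b) isOpen_Ioo (nonempty_Ioo.2 hab)
  have hgc : ContinuousAt g c := not_not.1 hcD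
  have heq : g =ᶠ[𝓝 c] f' := by
    filter_upwards [isOpen_Ioo.mem_nhds hcU] with x hx
    have hx0 : (0 : ℝ) ≤ x := ha0.trans hx.1.le
    simp [hg, max_eq_left hx0, min_eq_left hx.2.le]
  have hfc : ContinuousAt f' c := hgc.congr heq
  exact ⟨c, ⟨hcU.1, hcU.2.trans hbζ⟩, hfc.continuousWithinAt⟩

/-- **Convergence of terminal values of killed nondecreasing paths** (Statement 3).
Let `ζ p → ζ∞` in `(0,∞)` and let `f p` be nondecreasing on `[0, ζ p)`,
`f∞` nondecreasing on `[0, ζ∞)`.  Write `M p = sup_{[0, ζ p)} f p` (a priori in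
`ℝ ∪ {+∞}`, i.e. `EReal`) and `M∞ = sup_{[0, ζ∞)} f∞`.  If
(i) `f p c → f∞ c` at every continuity point `c ∈ [0, ζ∞)` of `f∞`, and
(ii) `lim_{c ↑ ζ∞} limsup_p (M p − f p c) = 0`,
then `M∞ < +∞` and `M p → M∞`. -/
theorem terminal_values_of_killed_paths_converge
    (ζ : ℕ → ℝ) (ζ' : ℝ) (hζpos : ∀ p, 0 < ζ p) (hζ'pos : 0 < ζ')
    (hζ : Tendsto ζ atTop (𝓝 ζ'))
    (f : ℕ → ℝ → ℝ) (f' : ℝ → ℝ)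
    (hmono : ∀ p, MonotoneOn (f p) (Ico 0 (ζ p)))
    (hmono' : MonotoneOn f' (Ico 0 ζ'))
    (hpt : ∀ c ∈ Ico (0 : ℝ) ζ', ContinuousWithinAt f' (Ico 0 ζ') c →
      Tendsto (fun p => f p c) atTop (𝓝 (f' c)))
    (hunif : Tendsto
      (fun c : ℝ => limsup
        (fun p => (⨆ x ∈ Ico (0 : ℝ) (ζ p), (f p x : EReal)) - (f p c : EReal))
        atTop)
      (𝓝[<] ζ') (𝓝 (0 : EReal))) :
    (⨆ x ∈ Ico (0 : ℝ) ζ', (f' x : EReal)) < ⊤ ∧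
      Tendsto (fun p => ⨆ x ∈ Ico (0 : ℝ) (ζ p), (f p x : EReal)) atTop
        (𝓝 (⨆ x ∈ Ico (0 : ℝ) ζ', (f' x : EReal))) := by
  set M : ℕ → EReal := fun p => ⨆ x ∈ Ico (0 : ℝ) (ζ p), (f p x : EReal) with hM
  set M' : EReal := ⨆ x ∈ Ico (0 : ℝ) ζ', (f' x : EReal) with hM'
  -- lower bound: M' ≤ liminf M
  have hlow : M' ≤ liminf M atTop := by
    refine iSup₂_le fun x hx => ?_
    obtain ⟨c, hc, hcont⟩ := exists_cont_pt_aux hmono' hx.1 hx.2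
    have hcm : c ∈ Ico (0 : ℝ) ζ' := ⟨hx.1.trans hc.1.le, hc.2⟩
    have h1 : (f' x : EReal) ≤ (f' c : EReal) :=
      EReal.coe_le_coe_iff.2 (hmono' hx hcm hc.1.le)
    refine h1.trans ?_
    have hfc : Tendsto (fun p => (f p c : EReal)) atTop (𝓝 (f' c : EReal)) :=
      EReal.tendsto_coe.2 (hpt c hcm hcont)
    rw [← hfc.liminf_eq]
    refine liminf_le_liminf ?_
    filter_upwards [hζ.eventually (eventually_gt_nhds hc.2)] with p hp
    exact le_iSup₂ (f := fun x _ => (f p x : EReal)) c ⟨hcm.1, hp⟩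
  -- key upper estimate
  have key : ∀ ε : ℝ, 0 < ε → ∃ c ∈ Ico (0 : ℝ) ζ',
      limsup M atTop ≤ (f' c : EReal) + (ε : EReal) := by
    intro ε hε
    have h0 : ∀ᶠ c in 𝓝[<] ζ',
        limsup (fun p => M p - (f p c : EReal)) atTop < (ε : EReal) :=
      hunif.eventually_lt_const (by exact_mod_cast hε)
    obtain ⟨l, hl, hsub⟩ := mem_nhdsLT_iff_exists_Ioo_subset.1 h0
    have hamax : max l 0 < ζ' := max_lt hl hζ'pos
    obtain ⟨c, hc, hcont⟩ := exists_cont_pt_aux hmono' (le_max_right l 0) hamax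
    have hcm : c ∈ Ico (0 : ℝ) ζ' := ⟨(le_max_right l 0).trans hc.1.le, hc.2⟩
    have hcmem : c ∈ Ioo l ζ' := ⟨(le_max_left l 0).trans_lt hc.1, hc.2⟩
    have hlt : limsup (fun p => M p - (f p c : EReal)) atTop < (ε : EReal) := hsub hcmem
    have hfc : Tendsto (fun p => (f p c : EReal)) atTop (𝓝 (f' c : EReal)) :=
      EReal.tendsto_coe.2 (hpt c hcm hcont)
    refine ⟨c, hcm, ?_⟩
    have heq : M = (fun p => M p - (f p c : EReal)) + fun p => (f p c : EReal) := by
      funext p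
      exact (EReal.sub_add_cancel).symm
    calc limsup M atTop
        = limsup ((fun p => M p - (f p c : EReal)) + fun p => (f p c : EReal)) atTop := by
          rw [← heq]
      _ ≤ (ε : EReal) + (f' c : EReal) :=
          EReal.limsup_add_le_of_le hlt (le_of_eq hfc.limsup_eq)
      _ = (f' c : EReal) + (ε : EReal) := add_comm _ _
  -- finiteness of limsup
  obtain ⟨c₁, hc₁, hkey₁⟩ := key 1 one_pos
  have hubfin : limsup M atTop < ⊤ := by
    refine hkey₁.trans_lt ?_
    rw [show (f' c₁ : EReal) + ((1 : ℝ) : EReal) = ((f' c₁ + 1 : ℝ) : EReal) by norm_cast]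
    exact EReal.coe_lt_top _
  have hM'top : M' < ⊤ := lt_of_le_of_lt (hlow.trans liminf_le_limsup) hubfin
  have hM'bot : (⊥ : EReal) < M' := by
    have h0m : (0 : ℝ) ∈ Ico (0 : ℝ) ζ' := ⟨le_refl _, hζ'pos⟩
    exact lt_of_lt_of_le (EReal.bot_lt_coe (f' 0))
      (le_iSup₂ (f := fun x _ => (f' x : EReal)) 0 h0m)
  obtain ⟨m, hm⟩ : ∃ m : ℝ, M' = (m : EReal) :=
    ⟨M'.toReal, (EReal.coe_toReal hM'top.ne hM'bot.ne').symm⟩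
  -- upper bound: limsup M ≤ M'
  have hup : limsup M atTop ≤ M' := by
    rw [hm]
    by_contra h
    push_neg at h
    obtain ⟨x, hx1, hx2⟩ := exists_between h
    have hxtop : x ≠ ⊤ := (hx2.trans hubfin).ne
    have hxbot : x ≠ ⊥ := ((EReal.bot_lt_coe m).trans hx1).ne'
    lift x to ℝ using ⟨hxtop, hxbot⟩
    have hε : 0 < x - m := by exact_mod_cast sub_pos.2 (EReal.coe_lt_coe_iff.1 hx1)
    obtain ⟨c, hcm, hle⟩ := key (x - m) hε
    have hfc : (f' c : EReal) ≤ (m : EReal) := by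
      rw [← hm]
      exact le_iSup₂ (f := fun x _ => (f' x : EReal)) c hcm
    have : limsup M atTop ≤ (x : EReal) := by
      refine hle.trans ?_
      calc (f' c : EReal) + ((x - m : ℝ) : EReal)
          ≤ (m : EReal) + ((x - m : ℝ) : EReal) := add_le_add_left hfc _
        _ = (x : EReal) := by norm_cast; ring
    exact absurd (hx2.trans_le this) (lt_irrefl _)
  exact ⟨hM'top, tendsto_of_le_liminf_of_limsup_le hlow hup⟩
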